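/- Let A be an expanding integer n×n matrix and let K ⊂ ℤⁿ contain a complete set of coset representatives of ℤⁿ/A(ℤⁿ). Then the map Φ : K^{-ω} × ℤⁿ → ℝⁿ defined by Φ(…x₂x₁, v) = v + A^{-1}x₁ + A^{-2}x₂ + … is surjective. -/

import Mathlib

def IsExpanding {n : ℕ} (A : Matrix (Fin n) (Fin n) ℤ) : Prop :=
  ∀ μ : ℂ, (A.map (Int.cast : ℤ → ℂ)).charpoly.IsRoot μ → 1 < ‖μ‖

section Aux

attribute [local instance] Matrix.linftyOpNormedAddCommGroup Matrix.linftyOpNormedRing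
  Matrix.linftyOpNormedAlgebra

open Matrix Polynomial Filter Pointwise

noncomputable local instance matComplete {m k : Type*} [Fintype m] [Fintype k] {α : Type*}
    [NormedAddCommGroup α] [NormedSpace ℝ α] [CompleteSpace α] [FiniteDimensional ℝ α] :
    CompleteSpace (Matrix m k α) :=
  (inferInstance : CompleteSpace (m → k → α))

/-- spectrum of a matrix over a field = roots of charpoly -/
lemma mem_spectrum_iff_isRoot {n : ℕ} (M : Matrix (Fin n) (Fin n) ℂ) (μ : ℂ) :
    μ ∈ spectrum ℂ M ↔ M.charpoly.IsRoot μ := by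
  have hmap : (charmatrix M).map (Polynomial.evalRingHom μ) = (algebraMap ℂ _) μ - M := by
    ext i j
    by_cases h : i = j
    · subst h
      simp [charmatrix_apply_eq, Matrix.algebraMap_matrix_apply]
    · simp [charmatrix_apply_ne _ _ _ h, Matrix.algebraMap_matrix_apply, h]
  have heval : M.charpoly.eval μ = ((algebraMap ℂ (Matrix (Fin n) (Fin n) ℂ)) μ - M).det := by
    rw [Matrix.charpoly, ← hmap, ← Polynomial.coe_evalRingHom, RingHom.map_det,
      RingHom.mapMatrix_apply]
  rw [spectrum.mem_iff, Polynomial.IsRoot, heval, Matrix.isUnit_iff_isUnit_det,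
    isUnit_iff_ne_zero, not_not]

lemma expanding_det_ne_zero {n : ℕ} {A : Matrix (Fin n) (Fin n) ℤ} (hA : IsExpanding A) :
    A.det ≠ 0 := by
  intro h
  have hd : (A.map (Int.cast : ℤ → ℂ)).det = 0 := by
    have h2 := (RingHom.map_det (Int.castRingHom ℂ) A).symm
    simp only [RingHom.mapMatrix_apply, Int.coe_castRingHom] at h2
    rw [h2, h, Int.cast_zero]
  have hroot : (A.map (Int.cast : ℤ → ℂ)).charpoly.IsRoot 0 := by
    have hc := Matrix.det_eq_sign_charpoly_coeff (A.map (Int.cast : ℤ → ℂ))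
    rw [hd] at hc
    have h0 : (A.map (Int.cast : ℤ → ℂ)).charpoly.coeff 0 = 0 := by
      rcases mul_eq_zero.mp hc.symm with h1 | h1
      · exact absurd h1 (pow_ne_zero _ (by norm_num))
      · exact h1
    rwa [Polynomial.coeff_zero_eq_eval_zero] at h0
  have := hA 0 hroot
  simp only [norm_zero] at this
  exact absurd this (by norm_num)

lemma summable_norm_pow {n : ℕ} (A : Matrix (Fin n) (Fin n) ℤ) (hA : IsExpanding A) :
    Summable fun m : ℕ => ‖(A.map (Int.cast : ℤ → ℝ))⁻¹ ^ m‖ := by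
  classical
  set Br : Matrix (Fin n) (Fin n) ℝ := A.map (Int.cast : ℤ → ℝ) with hBrdef
  set Bc : Matrix (Fin n) (Fin n) ℂ := A.map (Int.cast : ℤ → ℂ) with hBcdef
  have hdet := expanding_det_ne_zero hA
  have hdetr : IsUnit Br.det := by
    have h2 := (RingHom.map_det (Int.castRingHom ℝ) A).symm
    simp only [RingHom.mapMatrix_apply, Int.coe_castRingHom] at h2
    rw [hBrdef, h2, isUnit_iff_ne_zero]
    exact_mod_cast hdet
  have hdetc : IsUnit Bc.det := by
    have h2 := (RingHom.map_det (Int.castRingHom ℂ) A).symm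
    simp only [RingHom.mapMatrix_apply, Int.coe_castRingHom] at h2
    rw [hBcdef, h2, isUnit_iff_ne_zero]
    exact_mod_cast hdet
  have hMBr : Br⁻¹ * Br = 1 := Matrix.nonsing_inv_mul _ hdetr
  have hBrmap : Br.map Complex.ofRealHom = Bc := by
    rw [hBrdef, hBcdef]
    ext i j
    simp
  have hinvmap : Br⁻¹.map Complex.ofRealHom = Bc⁻¹ := by
    apply (Matrix.inv_eq_left_inv _).symm
    rw [← hBrmap, ← Matrix.map_mul, hMBr]
    exact Matrix.map_one _ (map_zero _) (map_one _)
  have hpowmap : ∀ m : ℕ, (Br⁻¹ ^ m).map Complex.ofRealHom = Bc⁻¹ ^ m := by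
    intro m
    have : ∀ N : Matrix (Fin n) (Fin n) ℝ, N.map Complex.ofRealHom =
        Complex.ofRealHom.mapMatrix N := fun _ => rfl
    rw [this, map_pow, ← this, hinvmap]
  have hnormmap : ∀ N : Matrix (Fin n) (Fin n) ℝ, ‖N.map Complex.ofRealHom‖₊ = ‖N‖₊ := by
    intro N
    rw [Matrix.linfty_opNNNorm_def, Matrix.linfty_opNNNorm_def]
    congr 1
    funext i
    congr 1
    funext j
    simp [Matrix.map_apply]
  have hnorm : ∀ m : ℕ, ‖Br⁻¹ ^ m‖ = ‖Bc⁻¹ ^ m‖ := by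
    intro m
    rw [← hpowmap m, ← coe_nnnorm, ← coe_nnnorm, hnormmap]
  have hMBc : Bc⁻¹ * Bc = 1 := Matrix.nonsing_inv_mul _ hdetc
  have hBMc : Bc * Bc⁻¹ = 1 := Matrix.mul_nonsing_inv _ hdetc
  set uc : (Matrix (Fin n) (Fin n) ℂ)ˣ := ⟨Bc, Bc⁻¹, hBMc, hMBc⟩ with hucdef
  set r0 : NNReal := (Bc⁻¹.charpoly.roots.toFinset.sup fun μ => ‖μ‖₊) with hr0def
  have hroots_lt : ∀ μ ∈ Bc⁻¹.charpoly.roots.toFinset, ‖μ‖₊ < 1 := by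
    intro μ hμ
    have hroot : Bc⁻¹.charpoly.IsRoot μ :=
      Polynomial.isRoot_of_mem_roots (Multiset.mem_toFinset.mp hμ)
    have hspec : μ ∈ spectrum ℂ (Bc⁻¹) := (mem_spectrum_iff_isRoot _ μ).mpr hroot
    have hμ0 : μ ≠ 0 := by
      refine spectrum.ne_zero_of_mem_of_unit (a := uc⁻¹) ?_
      exact hspec
    have hspec' : (μ⁻¹ : ℂ) ∈ spectrum ℂ Bc := by
      have h3 := (spectrum.inv_mem_iff (r := (Units.mk0 μ hμ0)⁻¹) (a := uc)).mpr ?_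
      · simpa only [Units.val_inv_eq_inv_val, Units.val_mk0] using h3
      · simpa using hspec
    have hroot' : Bc.charpoly.IsRoot μ⁻¹ := (mem_spectrum_iff_isRoot _ _).mp hspec'
    have h1 : 1 < ‖μ⁻¹‖ := hA μ⁻¹ hroot'
    have h2 : ‖μ‖ < 1 := by
      rw [norm_inv] at h1
      have hpos : 0 < ‖μ‖ := norm_pos_iff.mpr hμ0
      have := (one_lt_inv_iff₀).mp h1
      exact this.2
    exact h2
  have hr0 : r0 < 1 := by
    rw [hr0def]
    exact Finset.sup_lt_iff (by norm_num : (⊥ : NNReal) < 1) |>.mpr hroots_lt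
  have hsr : spectralRadius ℂ (Bc⁻¹) < 1 := by
    have hle : spectralRadius ℂ (Bc⁻¹) ≤ (r0 : ENNReal) := by
      rw [spectralRadius]
      apply iSup₂_le
      intro μ hμ
      have hroot : Bc⁻¹.charpoly.IsRoot μ := (mem_spectrum_iff_isRoot _ μ).mp hμ
      have hmem : μ ∈ Bc⁻¹.charpoly.roots.toFinset := by
        rw [Multiset.mem_toFinset, Polynomial.mem_roots ((Matrix.charpoly_monic _).ne_zero)]
        exact hroot
      exact_mod_cast Finset.le_sup (f := fun μ : ℂ => ‖μ‖₊) hmem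
    calc spectralRadius ℂ (Bc⁻¹) ≤ (r0 : ENNReal) := hle
      _ < 1 := by exact_mod_cast hr0
  obtain ⟨c, hc1, hc2⟩ := exists_between hsr
  lift c to NNReal using hc2.ne_top
  have hgel := spectrum.pow_nnnorm_pow_one_div_tendsto_nhds_spectralRadius (Bc⁻¹)
  have hev : ∀ᶠ m : ℕ in Filter.atTop,
      ((‖Bc⁻¹ ^ m‖₊ : ENNReal) ^ (1 / (m : ℝ)) < (c : ENNReal)) ∧ 1 ≤ m :=
    (hgel.eventually_lt_const hc1).and (Filter.eventually_ge_atTop 1)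
  obtain ⟨N, hN⟩ := Filter.eventually_atTop.mp hev
  have hc2' : (c : ℝ) < 1 := by exact_mod_cast hc2
  have hbound : ∀ m, N ≤ m → ‖Bc⁻¹ ^ m‖ ≤ (c : ℝ) ^ m := by
    intro m hm
    obtain ⟨h1, h2⟩ := hN m hm
    have hm0 : (m : ℝ) ≠ 0 := Nat.cast_ne_zero.mpr (by omega)
    have hEN : (‖Bc⁻¹ ^ m‖₊ : ENNReal) ≤ (c : ENNReal) ^ m := by
      calc (‖Bc⁻¹ ^ m‖₊ : ENNReal)
          = ((‖Bc⁻¹ ^ m‖₊ : ENNReal) ^ (1 / (m : ℝ))) ^ (m : ℝ) := by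
            rw [← ENNReal.rpow_mul, one_div, inv_mul_cancel₀ hm0, ENNReal.rpow_one]
        _ ≤ (c : ENNReal) ^ (m : ℝ) := ENNReal.rpow_le_rpow h1.le (by positivity)
        _ = (c : ENNReal) ^ m := ENNReal.rpow_natCast _ _
    rw [← ENNReal.coe_pow, ENNReal.coe_le_coe] at hEN
    calc ‖Bc⁻¹ ^ m‖ = ((‖Bc⁻¹ ^ m‖₊ : NNReal) : ℝ) := rfl
      _ ≤ ((c ^ m : NNReal) : ℝ) := by exact_mod_cast hEN
      _ = (c : ℝ) ^ m := by push_cast; ring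
  rw [← summable_nat_add_iff N]
  have hcomp : Summable fun m : ℕ => (c : ℝ) ^ m * (c : ℝ) ^ N :=
    (summable_geometric_of_lt_one c.2 hc2').mul_right _
  apply Summable.of_nonneg_of_le (fun m => norm_nonneg _) _ hcomp
  intro m
  rw [hnorm]
  calc ‖Bc⁻¹ ^ (m + N)‖ ≤ (c : ℝ) ^ (m + N) := hbound _ (by omega)
    _ = (c : ℝ) ^ m * (c : ℝ) ^ N := pow_add _ _ _



/-- if `K ⊂ ℤⁿ` contains a complete set of coset representatives of
`ℤⁿ/A(ℤⁿ)`, then `Φ(…x₂x₁, v) = v + Σ_k A^{-k} x_k` is onto `ℝⁿ`. -/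
theorem stmt4 {n : ℕ} (A : Matrix (Fin n) (Fin n) ℤ) (hA : IsExpanding A)
    (K : Finset (Fin n → ℤ))
    (hK : ∀ z : Fin n → ℤ, ∃ k ∈ K, ∃ w : Fin n → ℤ, z = k + A.mulVec w) :
    ∀ p : Fin n → ℝ, ∃ (x : ℕ → (Fin n → ℤ)) (v : Fin n → ℤ) (s : Fin n → ℝ),
      (∀ k, x k ∈ K) ∧
      HasSum (fun k => ((A.map (Int.cast : ℤ → ℝ))⁻¹ ^ (k + 1)).mulVec
        (fun i => (x k i : ℝ))) s ∧
      p = (fun i => (v i : ℝ)) + s := by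
  classical
  intro p
  obtain ⟨k0, hk0, w0, hw0⟩ := hK 0
  set ι : (Fin n → ℤ) → (Fin n → ℝ) := fun v i => (v i : ℝ) with hιdef
  set Br : Matrix (Fin n) (Fin n) ℝ := A.map (Int.cast : ℤ → ℝ) with hBrdef
  set Mr : Matrix (Fin n) (Fin n) ℝ := Br⁻¹ with hMrdef
  have hdet := expanding_det_ne_zero hA
  have hdetr : IsUnit Br.det := by
    have h2 := (RingHom.map_det (Int.castRingHom ℝ) A).symm
    simp only [RingHom.mapMatrix_apply, Int.coe_castRingHom] at h2
    rw [hBrdef, h2, isUnit_iff_ne_zero]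
    exact_mod_cast hdet
  have hMBr : Mr * Br = 1 := Matrix.nonsing_inv_mul _ hdetr
  have hBMr : Br * Mr = 1 := Matrix.mul_nonsing_inv _ hdetr
  set ur : (Matrix (Fin n) (Fin n) ℝ)ˣ := ⟨Br, Mr, hBMr, hMBr⟩ with hurdef
  have hMBpow : ∀ m : ℕ, Mr ^ m * Br ^ m = 1 := by
    intro m
    have h1 : ((ur⁻¹ ^ m) * (ur ^ m) : (Matrix (Fin n) (Fin n) ℝ)ˣ) = 1 := by
      rw [inv_pow, inv_mul_cancel]
    have h2 : (((ur⁻¹ ^ m) * (ur ^ m) : (Matrix (Fin n) (Fin n) ℝ)ˣ) :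
        Matrix (Fin n) (Fin n) ℝ) = Mr ^ m * Br ^ m := by
      rw [Units.val_mul, Units.val_pow_eq_pow_val, Units.val_pow_eq_pow_val]
      rfl
    rw [← h2, h1, Units.val_one]
  have hιadd : ∀ a b : Fin n → ℤ, ι (a + b) = ι a + ι b := by
    intro a b
    funext i
    simp [hιdef]
  have hcastvec : ∀ w : Fin n → ℤ, ι (A.mulVec w) = Br.mulVec (ι w) := by
    intro w
    funext i
    simp only [hιdef, hBrdef, Matrix.mulVec, dotProduct, Matrix.map_apply]
    push_cast
    rfl
  have hsum : Summable fun m : ℕ => ‖Mr ^ m‖ := summable_norm_pow A hA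
  -- bound on digits
  set C : NNReal := K.sup fun k => ‖ι k‖₊ with hCdef
  set u : ℕ → ℝ := fun k => ‖Mr ^ (k + 1)‖ * C with hudef
  have hu : Summable u := ((summable_nat_add_iff 1).mpr hsum).mul_right _
  have hb : ∀ y : Fin n → ℤ, y ∈ K → ∀ k : ℕ, ‖(Mr ^ (k + 1)).mulVec (ι y)‖ ≤ u k := by
    intro y hy k
    calc ‖(Mr ^ (k + 1)).mulVec (ι y)‖ ≤ ‖Mr ^ (k + 1)‖ * ‖ι y‖ :=
          Matrix.linfty_opNorm_mulVec _ _
      _ ≤ ‖Mr ^ (k + 1)‖ * C := by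
          apply mul_le_mul_of_nonneg_left _ (norm_nonneg _)
          rw [← coe_nnnorm]
          exact_mod_cast Finset.le_sup (f := fun k => ‖ι k‖₊) hy
  have hsx : ∀ x : ℕ → ↥K, Summable fun k => (Mr ^ (k + 1)).mulVec (ι ↑(x k)) := by
    intro x
    exact Summable.of_norm_bounded hu fun k => hb _ (x k).2 k
  set f : (ℕ → ↥K) → (Fin n → ℝ) := fun x => ∑' k, (Mr ^ (k + 1)).mulVec (ι ↑(x k))
    with hfdef
  have hf : ∀ x : ℕ → ↥K, HasSum (fun k => (Mr ^ (k + 1)).mulVec (ι ↑(x k))) (f x) :=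
    fun x => (hsx x).hasSum
  -- continuity and compactness
  have hfcont : Continuous f := by
    refine continuous_tsum (fun k => ?_) hu (fun k x => hb _ (x k).2 k)
    show Continuous ((fun y : ↥K => (Mr ^ (k + 1)).mulVec (ι (y : Fin n → ℤ))) ∘
      fun x : ℕ → ↥K => x k)
    exact Continuous.comp continuous_of_discreteTopology (continuous_apply k)
  have hQcomp : IsCompact (Set.range f) := isCompact_range hfcont
  have hZclosed : IsClosed (Set.range ι) := by
    have heq : Set.range ι =
        ⋂ i : Fin n, (fun p : Fin n → ℝ => p i) ⁻¹' (Set.range ((↑) : ℤ → ℝ)) := by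
      ext q
      simp only [Set.mem_range, Set.mem_iInter, Set.mem_preimage]
      constructor
      · rintro ⟨v, rfl⟩ i
        exact ⟨v i, rfl⟩
      · intro h
        choose v hv using h
        exact ⟨v, funext fun i => hv i⟩
    rw [heq]
    exact isClosed_iInter fun i =>
      (Int.isClosedEmbedding_coe_real.isClosed_range).preimage (continuous_apply i)
  set F : Set (Fin n → ℝ) := Set.range f + Set.range ι with hFdef
  have hFclosed : IsClosed F := hZclosed.add_left_of_isCompact hQcomp
  have hmemF : ∀ (x : ℕ → ↥K) (v : Fin n → ℤ), f x + ι v ∈ F := fun x v =>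
    Set.add_mem_add (Set.mem_range_self x) (Set.mem_range_self v)
  -- contraction invariance
  have hcontract : ∀ q ∈ F, Mr.mulVec q ∈ F := by
    rintro q hq
    rw [hFdef, Set.mem_add] at hq
    obtain ⟨q1, ⟨x, rfl⟩, q2, ⟨v, rfl⟩, rfl⟩ := hq
    obtain ⟨k1, hk1, w, hw⟩ := hK v
    set x' : ℕ → ↥K := fun k => Nat.casesOn k ⟨k1, hk1⟩ x with hx'def
    have hT := (hf x).mapL (LinearMap.toContinuousLinearMap (Matrix.mulVecLin Mr))
    have hs3 : HasSum (fun k => (Mr ^ (k + 1 + 1)).mulVec (ι ↑(x k))) (Mr.mulVec (f x)) := by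
      convert hT using 2 with k
      · rfl
      rw [LinearMap.coe_toContinuousLinearMap', Matrix.mulVecLin_apply,
        Matrix.mulVec_mulVec, ← pow_succ']
      rfl
    have hs4 : HasSum (fun k => (Mr ^ (k + 1)).mulVec (ι ↑(x' k)))
        (Mr.mulVec (f x) + Mr.mulVec (ι k1)) := by
      have hs3' : HasSum (fun k => (Mr ^ (k + 1 + 1)).mulVec (ι ↑(x' (k + 1))))
          (Mr.mulVec (f x)) := hs3
      have := (hasSum_nat_add_iff (f := fun k => (Mr ^ (k + 1)).mulVec (ι ↑(x' k))) 1).mp hs3'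
      simpa [pow_one, hx'def] using this
    have hfx' : f x' = Mr.mulVec (f x) + Mr.mulVec (ι k1) := hs4.tsum_eq
    have hcalc : Mr.mulVec (f x + ι v) = f x' + ι w := by
      rw [hfx', hw, hιadd, hcastvec, Matrix.mulVec_add, Matrix.mulVec_add,
        Matrix.mulVec_mulVec, hMBr, Matrix.one_mulVec]
      abel
    rw [hcalc]
    exact hmemF x' w
  have hpowcontract : ∀ q ∈ F, ∀ m : ℕ, (Mr ^ m).mulVec q ∈ F := by
    intro q hq m
    induction m with
    | zero => simpa [Matrix.one_mulVec] using hq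
    | succ m ih =>
        have : (Mr ^ (m + 1)).mulVec q = Mr.mulVec ((Mr ^ m).mulVec q) := by
          rw [Matrix.mulVec_mulVec, ← pow_succ']
        rw [this]
        exact hcontract _ ih
  -- density
  have hpF : p ∈ F := by
    rw [← hFclosed.closure_eq]
    rw [Metric.mem_closure_iff]
    intro ε hε
    have htend : Filter.Tendsto (fun m => ‖Mr ^ m‖) Filter.atTop (nhds 0) :=
      hsum.tendsto_atTop_zero
    obtain ⟨m, hm⟩ := (htend.eventually_lt_const hε).exists
    set x0 : ℕ → ↥K := fun _ => ⟨k0, hk0⟩ with hx0def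
    set b : Fin n → ℝ := f x0 with hbdef
    set y : Fin n → ℝ := (Br ^ m).mulVec p - b with hydef
    set z : Fin n → ℤ := fun i => round (y i) with hzdef
    refine ⟨(Mr ^ m).mulVec (b + ι z), hpowcontract _ (hmemF x0 z) m, ?_⟩
    have hid : (Mr ^ m).mulVec ((Br ^ m).mulVec p) = p := by
      rw [Matrix.mulVec_mulVec, hMBpow m, Matrix.one_mulVec]
    have hdiff : p - (Mr ^ m).mulVec (b + ι z) = (Mr ^ m).mulVec (y - ι z) := by
      have hy2 : y - ι z = (Br ^ m).mulVec p - (b + ι z) := by rw [hydef]; abel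
      rw [hy2, Matrix.mulVec_sub, hid]
    have hynorm : ‖y - ι z‖ ≤ 1 := by
      rw [pi_norm_le_iff_of_nonneg zero_le_one]
      intro i
      have := abs_sub_round (y i)
      rw [Real.norm_eq_abs]
      calc |(y - ι z) i| = |y i - round (y i)| := by simp [hιdef, hzdef]
        _ ≤ 1 / 2 := abs_sub_round _
        _ ≤ 1 := by norm_num
    rw [dist_eq_norm, hdiff]
    calc ‖(Mr ^ m).mulVec (y - ι z)‖ ≤ ‖Mr ^ m‖ * ‖y - ι z‖ :=
          Matrix.linfty_opNorm_mulVec _ _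
      _ ≤ ‖Mr ^ m‖ * 1 := mul_le_mul_of_nonneg_left hynorm (norm_nonneg _)
      _ = ‖Mr ^ m‖ := mul_one _
      _ < ε := hm
  -- conclude
  rw [hFdef, Set.mem_add] at hpF
  obtain ⟨q1, ⟨x, rfl⟩, q2, ⟨v, rfl⟩, hpq⟩ := hpF
  refine ⟨fun k => ↑(x k), v, f x, fun k => (x k).2, hf x, ?_⟩
  rw [← hpq]
  show f x + ι v = ι v + f x
  abel

end Aux
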